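/- For the tripartite pure state |Ψ⟩ ∝ |000⟩ + (|0⟩+|1⟩)|11⟩ on C^2 ⊗ C^2 ⊗ C^2, the reduced state ρ_AB = Tr_C |Ψ⟩⟨Ψ| is separable, but the reduced state ρ_BC is entangled (its partial transpose is not positive semidefinite). -/

import Mathlib

open Matrix
open scoped ComplexOrder

/-- Partial transpose with respect to the second factor. -/
def ptranspose2 {a b : Type*} [Fintype a] [Fintype b]
    (ρ : Matrix (a × b) (a × b) ℂ) : Matrix (a × b) (a × b) ℂ :=
  fun p q => ρ (p.1, q.2) (q.1, p.2)

/-- The rank-one product projector |u⟩⟨u| ⊗ |v⟩⟨v|. -/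
noncomputable def prodProj {a b : Type*} (u : a → ℂ) (v : b → ℂ) :
    Matrix (a × b) (a × b) ℂ :=
  fun x y => (u x.1 * v x.2) * star (u y.1 * v y.2)

/-- Separable: a finite convex combination of pure product states. -/
def SeparableState {a b : Type*} [Fintype a] [Fintype b]
    (ρ : Matrix (a × b) (a × b) ℂ) : Prop :=
  ∃ (n : ℕ) (p : Fin n → ℝ) (u : Fin n → a → ℂ) (v : Fin n → b → ℂ),
    (∀ i, 0 ≤ p i) ∧ (∑ i, p i = 1) ∧
    ρ = ∑ i, (p i : ℂ) • prodProj (u i) (v i)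

lemma pt_prodProj {a b : Type*} [Fintype a] [Fintype b] (u : a → ℂ) (v : b → ℂ) :
    ptranspose2 (prodProj u v) = prodProj u (fun j => star (v j)) := by
  funext p q
  simp only [ptranspose2, prodProj, StarMul.star_mul, star_star]
  ring

lemma prodProj_quad_nonneg {a b : Type*} [Fintype a] [Fintype b]
    (u : a → ℂ) (v : b → ℂ) (x : a × b → ℂ) :
    0 ≤ star x ⬝ᵥ (prodProj u v) *ᵥ x := by
  have : star x ⬝ᵥ (prodProj u v) *ᵥ x
      = star (∑ q, star (u q.1 * v q.2) * x q) * (∑ q, star (u q.1 * v q.2) * x q) := by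
    simp only [dotProduct, mulVec, prodProj, Pi.star_apply, Finset.mul_sum,
      Finset.sum_mul, star_sum, StarMul.star_mul, star_star]
    rw [Finset.sum_comm]
    apply Finset.sum_congr rfl; intro q _
    apply Finset.sum_congr rfl; intro p _
    ring
  rw [this]
  exact star_mul_self_nonneg _

lemma pt_linear {a b : Type*} [Fintype a] [Fintype b] {n : ℕ}
    (c : Fin n → ℂ) (M : Fin n → Matrix (a × b) (a × b) ℂ) :
    ptranspose2 (∑ i, c i • M i) = ∑ i, c i • ptranspose2 (M i) := by
  funext r s
  simp [ptranspose2, Matrix.sum_apply]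

lemma sep_pt_quad {a b : Type*} [Fintype a] [Fintype b]
    {ρ : Matrix (a × b) (a × b) ℂ} (h : SeparableState ρ) (x : a × b → ℂ) :
    0 ≤ star x ⬝ᵥ (ptranspose2 ρ) *ᵥ x := by
  obtain ⟨n, p, u, v, hp, _, rfl⟩ := h
  rw [pt_linear]
  simp only [pt_prodProj]
  have hq : ∀ (A : Fin n → Matrix (a × b) (a × b) ℂ),
      star x ⬝ᵥ (∑ i, A i) *ᵥ x = ∑ i, star x ⬝ᵥ (A i) *ᵥ x := by
    intro A
    simp only [mulVec, dotProduct, Matrix.sum_apply, Finset.sum_mul, Finset.mul_sum]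
    refine Eq.trans (Finset.sum_congr rfl fun p _ => Finset.sum_comm) Finset.sum_comm
  rw [hq]
  apply Finset.sum_nonneg
  intro i _
  rw [Matrix.smul_mulVec, dotProduct_smul, smul_eq_mul]
  exact mul_nonneg (by exact_mod_cast hp i) (prodProj_quad_nonneg _ _ _)

/-- For |Ψ⟩ = (1/√3)(|000⟩ + |011⟩ + |111⟩), the reduced state ρ_AB is separable but
ρ_BC is entangled: its partial transpose is not positive semidefinite. -/
theorem counterexample_converse
    (ψ : Fin 2 × Fin 2 × Fin 2 → ℂ)
    (hψ : ψ = fun q =>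
      if q = (0, 0, 0) ∨ q = (0, 1, 1) ∨ q = (1, 1, 1)
      then ((1 / Real.sqrt 3 : ℝ) : ℂ) else 0)
    (ρAB : Matrix (Fin 2 × Fin 2) (Fin 2 × Fin 2) ℂ)
    (hρAB : ρAB = fun q r => ∑ k : Fin 2, ψ (q.1, q.2, k) * star (ψ (r.1, r.2, k)))
    (ρBC : Matrix (Fin 2 × Fin 2) (Fin 2 × Fin 2) ℂ)
    (hρBC : ρBC = fun q r => ∑ i : Fin 2, ψ (i, q.1, q.2) * star (ψ (i, r.1, r.2))) :
    SeparableState ρAB ∧ ¬ SeparableState ρBC ∧ ¬ (ptranspose2 ρBC).PosSemidef := by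
  have h3 : (1 / Real.sqrt 3) * (1 / Real.sqrt 3) = 1/3 := by
    rw [div_mul_div_comm, one_mul, Real.mul_self_sqrt] <;> norm_num
  have h2 : ((1 / Real.sqrt 2 : ℝ) : ℂ) * ((1 / Real.sqrt 2 : ℝ) : ℂ) = 1/2 := by
    rw [← Complex.ofReal_mul, div_mul_div_comm, one_mul, Real.mul_self_sqrt] <;> norm_num
  have hc : ((1 / Real.sqrt 3 : ℝ) : ℂ) * ((1 / Real.sqrt 3 : ℝ) : ℂ) = 1/3 := by
    rw [← Complex.ofReal_mul, h3]; norm_num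
  have hs3 : ((Real.sqrt 3 : ℝ) : ℂ) * ((Real.sqrt 3 : ℝ) : ℂ) = 3 := by
    rw [← Complex.ofReal_mul, Real.mul_self_sqrt] <;> norm_num
  have hi3 : ((Real.sqrt 3 : ℝ) : ℂ)⁻¹ * ((Real.sqrt 3 : ℝ) : ℂ)⁻¹ = 1/3 := by
    rw [← mul_inv, ← Complex.ofReal_mul, Real.mul_self_sqrt] <;> norm_num
  have hs2 : ((Real.sqrt 2 : ℝ) : ℂ)⁻¹ * ((Real.sqrt 2 : ℝ) : ℂ)⁻¹ = 1/2 := by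
    rw [← mul_inv, ← Complex.ofReal_mul, Real.mul_self_sqrt] <;> norm_num
  -- witness vector for non-positivity of the partial transpose of ρBC
  set x : Fin 2 × Fin 2 → ℂ :=
    fun p => if p = (0,1) then (1:ℂ) else if p = (1,0) then -1 else 0 with hx
  have hval : star x ⬝ᵥ (ptranspose2 ρBC) *ᵥ x = ((-2/3 : ℝ) : ℂ) := by
    subst hψ hρBC
    simp only [hx, ptranspose2, dotProduct, mulVec, Fintype.sum_prod_type,
      Fin.sum_univ_two, Prod.mk.injEq, Pi.star_apply]
    norm_num [Complex.star_def, ← Complex.ofReal_mul, h3]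
    rw [hi3]
    norm_num
  have hneg : ¬ (0 ≤ star x ⬝ᵥ (ptranspose2 ρBC) *ᵥ x) := by
    rw [hval]
    intro h
    rw [Complex.zero_le_real] at h
    norm_num at h
  refine ⟨?_, fun h => hneg (sep_pt_quad h x), fun h => hneg (h.dotProduct_mulVec_nonneg x)⟩
  refine ⟨2, ![(1/3 : ℝ), 2/3],
    ![fun j : Fin 2 => if j = 0 then (1:ℂ) else 0, fun _ => ((1 / Real.sqrt 2 : ℝ) : ℂ)],
    ![fun j : Fin 2 => if j = 0 then (1:ℂ) else 0, fun j => if j = 1 then (1:ℂ) else 0],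
    ?_, ?_, ?_⟩
  · intro i; fin_cases i <;> norm_num
  · simp [Fin.sum_univ_two]; norm_num
  · subst hψ hρAB
    funext q r
    fin_cases q <;> fin_cases r <;>
      simp [Fin.sum_univ_two, prodProj, Prod.mk.injEq, Complex.star_def,
        Complex.conj_ofReal] <;>
      norm_num [← Complex.ofReal_mul, h3] <;>
      norm_num [hi3, hs3, hs2]
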